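/- Fix integers k, r ≥ 2 with (r, k) ≠ (2, 2), and set x* = r(k−1) − r/(r−1). Then for every real x ≥ x*, one has e^{−x} x^{k−1} / (f_{k−1}(x)·(k−2)!) < 1/(r−1). -/

import Mathlib

/-- `fPo k μ = e^{-μ} ∑_{i ≥ k} μ^i / i!`, the probability that a Poisson random
variable with mean `μ` is at least `k`. -/
noncomputable def fPo (k : ℕ) (μ : ℝ) : ℝ :=
  Real.exp (-μ) * ∑' i : ℕ, μ ^ (k + i) / (Nat.factorial (k + i) : ℝ)


lemma summable_tail (j : ℕ) (x : ℝ) :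
    Summable (fun i : ℕ => x ^ (j + i) / (Nat.factorial (j + i) : ℝ)) := by
  have h := Real.summable_pow_div_factorial x
  have h2 := (summable_nat_add_iff j).2 h
  simpa [add_comm] using h2

lemma key (m : ℕ) : ∀ (j : ℕ) (x : ℝ), 2*(j:ℝ) + (m:ℝ) + 1 ≤ 2*x →
    ((j+m).factorial : ℝ) ≤ x ^ m * (j.factorial : ℝ) := by
  induction m using Nat.strong_induction_on with
  | _ m ih =>
    rcases m with _ | _ | m
    · intro j x _; simp
    · intro j x h
      have h1 : ((j:ℝ)+1) ≤ x := by push_cast at h; linarith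
      have e : ((j+1).factorial : ℝ) = ((j:ℝ)+1) * (j.factorial : ℝ) := by
        rw [Nat.factorial_succ]; push_cast; ring
      rw [e, pow_one]
      have : (0:ℝ) ≤ (j.factorial : ℝ) := by positivity
      nlinarith
    · intro j x h
      push_cast at h
      have hx : 0 < x := by
        have : (0:ℝ) ≤ (j:ℝ) := Nat.cast_nonneg j
        linarith
      have ih' := ih m (by omega) (j+1) x (by push_cast; linarith)
      have e1 : ((j + (m+2)).factorial : ℝ) = ((j:ℝ)+(m:ℝ)+2) * ((j+1+m).factorial : ℝ) := by
        have e : j + (m+2) = (j+1+m) + 1 := by omega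
        rw [e, Nat.factorial_succ]; push_cast; ring
      have e2 : ((j+1).factorial : ℝ) = ((j:ℝ)+1) * (j.factorial : ℝ) := by
        rw [Nat.factorial_succ]; push_cast; ring
      rw [e2] at ih'
      have hpair : ((j:ℝ)+(m:ℝ)+2) * ((j:ℝ)+1) ≤ x^2 := by
        nlinarith [sq_nonneg ((m:ℝ)+1), (Nat.cast_nonneg j : (0:ℝ) ≤ (j:ℝ)), (Nat.cast_nonneg m : (0:ℝ) ≤ (m:ℝ))]
      rw [e1]
      have hfnn : (0:ℝ) ≤ (j.factorial : ℝ) := by positivity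
      have hxm : (0:ℝ) ≤ x ^ m := by positivity
      calc ((j:ℝ)+(m:ℝ)+2) * ((j+1+m).factorial : ℝ)
          ≤ ((j:ℝ)+(m:ℝ)+2) * (x ^ m * (((j:ℝ)+1) * (j.factorial : ℝ))) := by
            apply mul_le_mul_of_nonneg_left ih'
            have : (0:ℝ) ≤ (j:ℝ) := Nat.cast_nonneg j
            have : (0:ℝ) ≤ (m:ℝ) := Nat.cast_nonneg m
            linarith
        _ = (((j:ℝ)+(m:ℝ)+2) * ((j:ℝ)+1)) * (x ^ m * (j.factorial : ℝ)) := by ring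
        _ ≤ x^2 * (x ^ m * (j.factorial : ℝ)) := by
            apply mul_le_mul_of_nonneg_right hpair (by positivity)
        _ = x ^ (m+2) * (j.factorial : ℝ) := by ring

lemma general (p q : ℕ) (x : ℝ) (hbig : 3*q+5 ≤ (q+1)^2*(p+1))
    (hx : ((q:ℝ)+2)*((p:ℝ)+1) - ((q:ℝ)+2)/((q:ℝ)+1) ≤ x) :
    ((q:ℝ)+1) * x ^ (p+1) <
      (∑' i : ℕ, x ^ (p+1+i) / (Nat.factorial (p+1+i) : ℝ)) * (p.factorial : ℝ) := by
  have hq0 : (0:ℝ) ≤ (q:ℝ) := Nat.cast_nonneg q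
  have hp0 : (0:ℝ) ≤ (p:ℝ) := Nat.cast_nonneg p
  have hq1 : (0:ℝ) < (q:ℝ)+1 := by linarith
  have hbigR : (3*(q:ℝ)+5) ≤ ((q:ℝ)+1)^2*((p:ℝ)+1) := by exact_mod_cast hbig
  -- bound on the division term
  have hdiv : ((q:ℝ)+2)/((q:ℝ)+1) ≤ (((q:ℝ)+1)*((p:ℝ)+1) - 1)/2 := by
    rw [div_le_div_iff₀ hq1 (by norm_num : (0:ℝ) < 2)]
    nlinarith
  have hcond : 2*((p:ℝ)+1) + ((q:ℝ)+1)*((p:ℝ)+1) + 1 ≤ 2*x := by nlinarith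
  have hx0 : 0 < x := by nlinarith
  set N : ℕ := (q+1)*(p+1)+1 with hN
  have hterm : ∀ m ∈ Finset.range N,
      x^(p+1)/((p+1).factorial : ℝ) ≤ x^(p+1+m)/((p+1+m).factorial : ℝ) := by
    intro m hm
    have hmle : (m:ℝ) ≤ ((q:ℝ)+1)*((p:ℝ)+1) := by
      have : m ≤ (q+1)*(p+1) := by
        have := Finset.mem_range.1 hm; omega
      calc (m:ℝ) ≤ (((q+1)*(p+1) : ℕ) : ℝ) := by exact_mod_cast this
        _ = ((q:ℝ)+1)*((p:ℝ)+1) := by push_cast; ring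
    have hc : 2*(((p+1:ℕ)):ℝ) + (m:ℝ) + 1 ≤ 2*x := by push_cast; linarith
    have hk := key m (p+1) x hc
    rw [div_le_div_iff₀ (by positivity) (by positivity)]
    calc x^(p+1) * ((p+1+m).factorial : ℝ)
        ≤ x^(p+1) * (x ^ m * ((p+1).factorial : ℝ)) := by
          apply mul_le_mul_of_nonneg_left hk (by positivity)
      _ = x^(p+1+m) * ((p+1).factorial : ℝ) := by rw [pow_add]; ring
  have hsumge : (N:ℝ) * (x^(p+1)/((p+1).factorial : ℝ)) ≤
      ∑ m ∈ Finset.range N, x^(p+1+m)/((p+1+m).factorial : ℝ) := by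
    have h := Finset.card_nsmul_le_sum (Finset.range N) _ _ hterm
    simpa [nsmul_eq_mul, Finset.card_range] using h
  have hps : ∑ m ∈ Finset.range N, x^(p+1+m)/((p+1+m).factorial : ℝ) ≤
      ∑' i : ℕ, x ^ (p+1+i) / (Nat.factorial (p+1+i) : ℝ) :=
    Summable.sum_le_tsum _ (fun i _ => by positivity) (summable_tail (p+1) x)
  have hfp : (0:ℝ) < (p.factorial : ℝ) := by
    exact_mod_cast Nat.factorial_pos p
  have hNcast : (N:ℝ) = ((q:ℝ)+1)*((p:ℝ)+1)+1 := by rw [hN]; push_cast; ring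
  have hfact : ((p+1).factorial : ℝ) = ((p:ℝ)+1) * (p.factorial : ℝ) := by
    rw [Nat.factorial_succ]; push_cast; ring
  have hXpos : 0 < x^(p+1) := by positivity
  have step1 : ((q:ℝ)+1) * x^(p+1) < (N:ℝ) * (x^(p+1)/((p+1).factorial : ℝ)) * (p.factorial : ℝ) := by
    rw [hNcast, hfact]
    rw [div_eq_mul_inv, mul_inv]
    have hip : (((p:ℝ)+1))⁻¹ * (p.factorial : ℝ)⁻¹ * (p.factorial : ℝ) = ((p:ℝ)+1)⁻¹ := by
      field_simp
    have hp1 : (0:ℝ) < (p:ℝ)+1 := by linarith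
    have h2 : (((q:ℝ)+1)*((p:ℝ)+1)+1) * (x ^ (p+1) * (((p:ℝ)+1)⁻¹ * (p.factorial:ℝ)⁻¹)) * (p.factorial:ℝ)
        = (((q:ℝ)+1)*((p:ℝ)+1)+1) * x ^ (p+1) * ((p:ℝ)+1)⁻¹ := by
      field_simp
    rw [h2]
    rw [← sub_pos]
    have e : (((q:ℝ)+1)*((p:ℝ)+1)+1) * x ^ (p+1) * ((p:ℝ)+1)⁻¹ - ((q:ℝ)+1) * x^(p+1)
        = x ^ (p+1) * ((p:ℝ)+1)⁻¹ := by
      field_simp; ring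
    rw [e]
    positivity
  calc ((q:ℝ)+1) * x^(p+1) < (N:ℝ) * (x^(p+1)/((p+1).factorial : ℝ)) * (p.factorial : ℝ) := step1
    _ ≤ (∑ m ∈ Finset.range N, x^(p+1+m)/((p+1+m).factorial : ℝ)) * (p.factorial : ℝ) :=
        mul_le_mul_of_nonneg_right hsumge hfp.le
    _ ≤ (∑' i : ℕ, x ^ (p+1+i) / (Nat.factorial (p+1+i) : ℝ)) * (p.factorial : ℝ) :=
        mul_le_mul_of_nonneg_right hps hfp.le

lemma tail5 (j : ℕ) (x : ℝ) (hx : 0 ≤ x) :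
    x^j/(j.factorial:ℝ) + x^(j+1)/((j+1).factorial:ℝ) + x^(j+2)/((j+2).factorial:ℝ)
      + x^(j+3)/((j+3).factorial:ℝ) + x^(j+4)/((j+4).factorial:ℝ)
      ≤ ∑' i : ℕ, x ^ (j+i) / ((j+i).factorial : ℝ) := by
  have h := Summable.sum_le_tsum (Finset.range 5)
    (fun i _ => div_nonneg (pow_nonneg hx _) (Nat.cast_nonneg _)) (summable_tail j x)
  rw [Finset.sum_range_succ, Finset.sum_range_succ, Finset.sum_range_succ,
    Finset.sum_range_succ, Finset.sum_range_one] at h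
  simpa only [add_zero] using h

lemma chain (x c : ℝ) (hc : c ≤ x) (hx : 0 ≤ x) (n : ℕ) : c * x^n ≤ x^(n+1) := by
  rw [pow_succ]
  nlinarith [mul_nonneg (pow_nonneg hx n) (sub_nonneg.2 hc)]

lemma central (p q : ℕ) (x : ℝ) (hne : ¬(q = 0 ∧ p = 0))
    (hx : ((q:ℝ)+2)*((p:ℝ)+1) - ((q:ℝ)+2)/((q:ℝ)+1) ≤ x) :
    ((q:ℝ)+1) * x ^ (p+1) < (∑' i : ℕ, x ^ (p+1+i) / ((p+1+i).factorial : ℝ)) * (p.factorial : ℝ) := by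
  by_cases hbig : 3*q+5 ≤ (q+1)^2*(p+1)
  · exact general p q x hbig hx
  · have hq2 : q ≤ 2 := by by_contra hq; push_neg at hq; exact hbig (by nlinarith)
    have hp3 : p ≤ 3 := by by_contra hp; push_neg at hp; exact hbig (by nlinarith)
    interval_cases q <;> interval_cases p
    -- (q,p) = (0,0)
    · exact absurd ⟨rfl, rfl⟩ hne
    -- (0,1): x ≥ 2, j = 2
    · norm_num [Nat.factorial] at hx ⊢
      have hx0 : (0:ℝ) ≤ x := by linarith
      have h5 := tail5 2 x hx0
      norm_num [Nat.factorial] at h5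
      have c2 : 2*x^2 ≤ x^3 := by simpa using chain x 2 hx hx0 2
      have c3 : 2*x^3 ≤ x^4 := by simpa using chain x 2 hx hx0 3
      have c4 : 2*x^4 ≤ x^5 := by simpa using chain x 2 hx hx0 4
      have c5 : 2*x^5 ≤ x^6 := by simpa using chain x 2 hx hx0 5
      have hp : (0:ℝ) < x^2 := by positivity
      linarith
    -- (0,2): x ≥ 4, j = 3
    · norm_num [Nat.factorial] at hx ⊢
      have hx0 : (0:ℝ) ≤ x := by linarith
      have h5 := tail5 3 x hx0
      norm_num [Nat.factorial] at h5
      have c3 : 4*x^3 ≤ x^4 := by simpa using chain x 4 hx hx0 3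
      have c4 : 4*x^4 ≤ x^5 := by simpa using chain x 4 hx hx0 4
      have c5 : 4*x^5 ≤ x^6 := by simpa using chain x 4 hx hx0 5
      have c6 : 4*x^6 ≤ x^7 := by simpa using chain x 4 hx hx0 6
      have hp : (0:ℝ) < x^3 := by positivity
      linarith
    -- (0,3): x ≥ 6, j = 4
    · norm_num [Nat.factorial] at hx ⊢
      have hx0 : (0:ℝ) ≤ x := by linarith
      have h5 := tail5 4 x hx0
      norm_num [Nat.factorial] at h5
      have c4 : 6*x^4 ≤ x^5 := by simpa using chain x 6 hx hx0 4
      have c5 : 6*x^5 ≤ x^6 := by simpa using chain x 6 hx hx0 5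
      have c6 : 6*x^6 ≤ x^7 := by simpa using chain x 6 hx hx0 6
      have c7 : 6*x^7 ≤ x^8 := by simpa using chain x 6 hx hx0 7
      have hp : (0:ℝ) < x^4 := by positivity
      linarith
    -- (1,0): x ≥ 3/2, j = 1
    · norm_num [Nat.factorial] at hx ⊢
      have hx0 : (0:ℝ) ≤ x := by linarith
      have h5 := tail5 1 x hx0
      norm_num [Nat.factorial] at h5
      have c1 : (3/2)*x^1 ≤ x^2 := by simpa using chain x (3/2) hx hx0 1
      have c2 : (3/2)*x^2 ≤ x^3 := by simpa using chain x (3/2) hx hx0 2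
      have c3 : (3/2)*x^3 ≤ x^4 := by simpa using chain x (3/2) hx hx0 3
      have c4 : (3/2)*x^4 ≤ x^5 := by simpa using chain x (3/2) hx hx0 4
      have hp : (0:ℝ) < x := by linarith
      have hx1 : x^1 = x := pow_one x
      linarith
    -- (1,1),(1,2),(1,3): big
    · norm_num at hbig
    · norm_num at hbig
    · norm_num at hbig
    -- (2,0): x ≥ 8/3, j = 1
    · norm_num [Nat.factorial] at hx ⊢
      have hx0 : (0:ℝ) ≤ x := by linarith
      have h5 := tail5 1 x hx0
      norm_num [Nat.factorial] at h5
      have c1 : (8/3)*x^1 ≤ x^2 := by simpa using chain x (8/3) hx hx0 1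
      have c2 : (8/3)*x^2 ≤ x^3 := by simpa using chain x (8/3) hx hx0 2
      have c3 : (8/3)*x^3 ≤ x^4 := by simpa using chain x (8/3) hx hx0 3
      have c4 : (8/3)*x^4 ≤ x^5 := by simpa using chain x (8/3) hx hx0 4
      have hp : (0:ℝ) < x := by linarith
      have hx1 : x^1 = x := pow_one x
      linarith
    -- (2,1),(2,2),(2,3): big
    · norm_num at hbig
    · norm_num at hbig
    · norm_num at hbig

theorem stmt7 (k r : ℕ) (hk : 2 ≤ k) (hr : 2 ≤ r) (hne : ¬(r = 2 ∧ k = 2)) :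
    ∀ x : ℝ, (r : ℝ) * ((k : ℝ) - 1) - (r : ℝ) / ((r : ℝ) - 1) ≤ x →
      Real.exp (-x) * x ^ (k - 1) / (fPo (k - 1) x * (Nat.factorial (k - 2) : ℝ)) <
        1 / ((r : ℝ) - 1) := by
  obtain ⟨p, rfl⟩ : ∃ p, k = p + 2 := ⟨k - 2, by omega⟩
  obtain ⟨q, rfl⟩ : ∃ q, r = q + 2 := ⟨r - 2, by omega⟩
  intro x hx
  have hne' : ¬(q = 0 ∧ p = 0) := by
    rintro ⟨rfl, rfl⟩; exact hne ⟨rfl, rfl⟩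
  have hx' : ((q:ℝ)+2)*((p:ℝ)+1) - ((q:ℝ)+2)/((q:ℝ)+1) ≤ x := by
    push_cast at hx
    have e : ((q:ℝ)+2) - 1 = (q:ℝ)+1 := by ring
    rw [e] at hx
    linarith
  have hc := central p q x hne' hx'
  -- positivity of x
  have hq0 : (0:ℝ) ≤ (q:ℝ) := Nat.cast_nonneg q
  have hp0 : (0:ℝ) ≤ (p:ℝ) := Nat.cast_nonneg p
  have hq1 : (0:ℝ) < (q:ℝ)+1 := by linarith
  have hx0 : 0 < x := by
    rcases Nat.eq_zero_or_pos p with rfl | hp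
    · have hq : 1 ≤ q := by omega
      have hqR : (1:ℝ) ≤ (q:ℝ) := by exact_mod_cast hq
      have hd : ((q:ℝ)+2)/((q:ℝ)+1) ≤ 3/2 := by
        rw [div_le_div_iff₀ hq1 (by norm_num : (0:ℝ) < 2)]
        linarith
      simp only [Nat.cast_zero] at hx'
      nlinarith
    · have hpR : (1:ℝ) ≤ (p:ℝ) := by exact_mod_cast hp
      have hd : ((q:ℝ)+2)/((q:ℝ)+1) ≤ 2 := by
        rw [div_le_iff₀ hq1]
        linarith
      nlinarith
  -- assemble
  have hk1 : p + 2 - 1 = p + 1 := rfl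
  have hk2 : p + 2 - 2 = p := rfl
  rw [hk1, hk2]
  set T := ∑' i : ℕ, x ^ (p+1+i) / ((p+1+i).factorial : ℝ) with hT
  have hsum := summable_tail (p+1) x
  have hT0 : 0 < T := by
    rw [hT]
    apply Summable.tsum_pos hsum (fun i => div_nonneg (pow_nonneg hx0.le _) (Nat.cast_nonneg _)) 0
    positivity
  have hfPo : fPo (p+1) x = Real.exp (-x) * T := rfl
  have hfp : (0:ℝ) < (p.factorial : ℝ) := by exact_mod_cast Nat.factorial_pos p
  have hD : 0 < fPo (p+1) x * (p.factorial : ℝ) := by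
    rw [hfPo]
    positivity
  have hr1 : (0:ℝ) < ((q+2:ℕ):ℝ) - 1 := by push_cast; linarith
  rw [div_lt_div_iff₀ hD hr1, one_mul]
  rw [hfPo]
  have hcc : (((q+2:ℕ):ℝ) - 1) = (q:ℝ)+1 := by push_cast; ring
  rw [hcc]
  have h2 := mul_lt_mul_of_pos_left hc (Real.exp_pos (-x))
  nlinarith [h2]
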